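/- Let d ≥ 2 and let Γ = (U, V, E) be a locally finite fully reflected bipartite graph on U = V = ℕ \ {0} with no edges (u, v_u), satisfying Hall's d-harem condition. Then there exists a perfect (1, d−1)-matching of Γ realizing a surjective (d−1)-to-1 function f : ℕ \ {0} → ℕ \ {0} such that every point is eventually periodic under f, i.e., for every n there exist k ≥ 0 and l ≥ 1 with f^{k+l}(n) = f^k(n). -/

import Mathlib

open Function

/-- Right-neighborhood (in V) of a set of left vertices. -/
def NR (E : Set (ℕ × ℕ)) (X : Set ℕ) : Set ℕ := {v | ∃ u ∈ X, (u, v) ∈ E}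

/-- Left-neighborhood (in U) of a set of right vertices. -/
def NL (E : Set (ℕ × ℕ)) (Y : Set ℕ) : Set ℕ := {u | ∃ v ∈ Y, (u, v) ∈ E}

/-- Hall's d-harem condition for the bipartite graph (U, V, E). -/
def HallHarem (d : ℕ) (U V : Set ℕ) (E : Set (ℕ × ℕ)) : Prop :=
  (∀ X ⊆ U, X.Finite → d * X.ncard ≤ (NR E X).ncard) ∧
  (∀ Y ⊆ V, Y.Finite → Y.ncard ≤ d * (NL E Y).ncard)

/-- A perfect (1,d)-matching of the bipartite graph (U, V, E). -/
def PerfectMatching (d : ℕ) (U V : Set ℕ) (E M : Set (ℕ × ℕ)) : Prop :=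
  M ⊆ E ∧ (∀ u ∈ U, {v | (u, v) ∈ M}.ncard = d) ∧ (∀ v ∈ V, ∃! u, (u, v) ∈ M)

/-- A subset X of the right side V is connected (Kierstead): any two of its
elements are joined by a path all of whose vertices lie in X ∪ N(X). -/
def ConnectedSubset (E : Set (ℕ × ℕ)) (X : Set ℕ) : Prop :=
  ∀ x ∈ X, ∀ x' ∈ X, ∃ (k : ℕ) (p : ℕ → ℕ), p 0 = x ∧ p k = x' ∧
    (∀ i ≤ k, p i ∈ X ∪ NL E X) ∧
    (∀ i < k, (p i, p (i + 1)) ∈ E ∨ (p (i + 1), p i) ∈ E)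

/-- x is accessible from y through X by the matching M. -/
def Accessible (E M : Set (ℕ × ℕ)) (X : Set ℕ) (y x : ℕ) : Prop :=
  ∃ (n : ℕ) (v' u' : ℕ → ℕ),
    (∀ i ≤ n, v' i ∈ X) ∧ (∀ i < n, u' i ∈ NL E X) ∧ v' n = x ∧
    (y, v' 0) ∈ E ∧
    ∀ i < n, (u' i, v' i) ∈ M ∧ (u' i, v' (i + 1)) ∈ E ∧ (u' i, v' (i + 1)) ∉ M

/-- A bipartite graph with V ⊆ U ⊆ ℕ (V a subset of the right copy of U)
is U-reflected: whenever (u, v) ∈ E and the right copy v_u = u lies in V,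
also (u_v, v_u) = (v, u) ∈ E. -/
def UReflected (V : Set ℕ) (E : Set (ℕ × ℕ)) : Prop :=
  ∀ u v : ℕ, (u, v) ∈ E → u ∈ V → (v, u) ∈ E

/-- f has controlled sizes of its cycles. -/
def ControlledCycles (f : ℕ → ℕ) : Prop :=
  f^[2] 1 = 1 ∧
  (∀ n, 2 ≤ n → ∀ i, 1 ≤ i → f^[i] n = n →
      (∀ j, 1 ≤ j → j < i → f^[j] n ≠ n) → i ≤ n) ∧
  (∀ n, 2 ≤ n → (∀ i, 1 ≤ i → i ≤ n → f^[i] n ≠ n) →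
      ∃ k l, k ≤ 2 * n ∧ 1 ≤ l ∧ l ≤ n ∧ f^[k + l] n = f^[k] n)

/-- C is a cycle of f. -/
def IsCycleOf (f : ℕ → ℕ) (C : Set ℕ) : Prop :=
  ∃ u i, 1 ≤ i ∧ f^[i] u = u ∧ (∀ j, 1 ≤ j → j < i → f^[j] u ≠ u) ∧
    C = {x | ∃ j < i, f^[j] u = x}

/-- The set of vertices touched by a set of edges. -/
def Verts (S : Set (ℕ × ℕ)) : Set ℕ := {x | ∃ p ∈ S, p.1 = x ∨ p.2 = x}

section CSB
open Set
private theorem csb_or {α : Type*} {β : Type*} [Nonempty β] {f : α → β} {g : β → α}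
    (hf : Function.Injective f) (hg : Function.Injective g) :
    ∃ h : α → β, Function.Bijective h ∧ ∀ a, h a = f a ∨ g (h a) = a := by
  classical
  set F : Set α →o Set α :=
    { toFun := fun s => (g '' (f '' s)ᶜ)ᶜ
      monotone' := fun s t hst =>
        compl_subset_compl.mpr <| Set.image_mono <|
          compl_subset_compl.mpr <| Set.image_mono hst }
  set s : Set α := F.lfp
  have hs : (g '' (f '' s)ᶜ)ᶜ = s := F.map_lfp
  have hns : g '' (f '' s)ᶜ = sᶜ := compl_injective (by simp [hs])
  set g' := Function.invFun g
  have g'g : Function.LeftInverse g' g := Function.leftInverse_invFun hg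
  have hg'ns : g' '' sᶜ = (f '' s)ᶜ := by rw [← hns, g'g.image_image]
  set h : α → β := s.piecewise f g'
  have hsur : Function.Surjective h := by
    rw [← Set.range_eq_univ, Set.range_piecewise, hg'ns, Set.union_compl_self]
  have hinj : Function.Injective h := by
    refine (Set.injective_piecewise_iff _).2 ⟨hf.injOn, ?_, ?_⟩
    · intro x hx y hy hxy
      obtain ⟨x', _, rfl⟩ : x ∈ g '' (f '' s)ᶜ := by rwa [hns]
      obtain ⟨y', _, rfl⟩ : y ∈ g '' (f '' s)ᶜ := by rwa [hns]
      rw [g'g _, g'g _] at hxy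
      rw [hxy]
    · intro x hx y hy hxy
      obtain ⟨y', hy', rfl⟩ : y ∈ g '' (f '' s)ᶜ := by rwa [hns]
      rw [g'g _] at hxy
      exact hy' ⟨x, hx, hxy⟩
  refine ⟨h, ⟨hinj, hsur⟩, fun a => ?_⟩
  by_cases ha : a ∈ s
  · left; exact Set.piecewise_eq_of_mem _ _ _ ha
  · right
    obtain ⟨b, _, rfl⟩ : a ∈ g '' (f '' s)ᶜ := by rwa [hns]
    have : h (g b) = g' (g b) := Set.piecewise_eq_of_notMem _ _ _ ha
    rw [this, g'g b]
end CSB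

section HaremAbs
variable {V : Type} [DecidableEq V] [Nonempty V] {A : V → V → Prop} {d : ℕ} {nbr : V → Finset V}

/-- Good witness: a function with adjacent values and all fibers of size `d-1`. -/
def IsGoodW (A : V → V → Prop) (d : ℕ) (g : V → V) : Prop :=
  (∀ v, A v (g v)) ∧ ∀ u, {v | g v = u}.ncard = d - 1

theorem exists_goodW (hd : 2 ≤ d) (hsymm : ∀ a b, A a b → A b a)
    (hnbr : ∀ a b, b ∈ nbr a ↔ A a b)
    (hall : ∀ s : Finset V, d * s.card ≤ (s.biUnion nbr).card) :
    ∃ g : V → V, IsGoodW A d g := by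
  classical
  have hd1 : 1 ≤ d - 1 := by omega
  haveI : Nonempty (Fin (d - 1)) := ⟨⟨0, by omega⟩⟩
  -- injection V → V × Fin (d-1)
  have h1 : ∀ s : Finset V,
      s.card ≤ (s.biUnion (fun v => (nbr v) ×ˢ (Finset.univ : Finset (Fin (d - 1))))).card := by
    intro s
    have he : s.biUnion (fun v => (nbr v) ×ˢ (Finset.univ : Finset (Fin (d - 1))))
        = (s.biUnion nbr) ×ˢ (Finset.univ : Finset (Fin (d - 1))) := by
      ext ⟨a, i⟩
      simp [Finset.mem_biUnion, Finset.mem_product]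
    rw [he, Finset.card_product]
    have h2 := hall s
    have : s.card ≤ d * s.card := Nat.le_mul_of_pos_left _ (by omega)
    calc s.card ≤ d * s.card := this
      _ ≤ (s.biUnion nbr).card := h2
      _ ≤ (s.biUnion nbr).card * Finset.univ.card := by
          apply Nat.le_mul_of_pos_right
          simp [Finset.card_univ]
          omega
  obtain ⟨φ, φinj, φmem⟩ :=
    (Finset.all_card_le_biUnion_card_iff_exists_injective
      (fun v => (nbr v) ×ˢ (Finset.univ : Finset (Fin (d - 1))))).1 h1
  -- injection V × Fin (d-1) → V
  have h2 : ∀ s : Finset (V × Fin (d - 1)), s.card ≤ (s.biUnion (fun p => nbr p.1)).card := by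
    intro s
    have hsub : s ⊆ (s.image Prod.fst) ×ˢ (Finset.univ : Finset (Fin (d - 1))) := by
      intro ⟨a, i⟩ h
      simp only [Finset.mem_product, Finset.mem_image, Finset.mem_univ, and_true]
      exact ⟨⟨a, i⟩, h, rfl⟩
    have he : (s.image Prod.fst).biUnion nbr = s.biUnion (fun p => nbr p.1) := by
      ext a
      simp only [Finset.mem_biUnion, Finset.mem_image]
      constructor
      · rintro ⟨b, ⟨p, hp, rfl⟩, hb⟩; exact ⟨p, hp, hb⟩
      · rintro ⟨p, hp, hb⟩; exact ⟨p.1, ⟨p, hp, rfl⟩, hb⟩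
    calc s.card ≤ ((s.image Prod.fst) ×ˢ (Finset.univ : Finset (Fin (d - 1)))).card :=
          Finset.card_le_card hsub
      _ = (s.image Prod.fst).card * (d - 1) := by rw [Finset.card_product]; simp
      _ ≤ (s.image Prod.fst).card * d := Nat.mul_le_mul_left _ (by omega)
      _ = d * (s.image Prod.fst).card := Nat.mul_comm _ _
      _ ≤ ((s.image Prod.fst).biUnion nbr).card := hall _
      _ = (s.biUnion (fun p => nbr p.1)).card := by rw [he]
  obtain ⟨ψ, ψinj, ψmem⟩ :=
    (Finset.all_card_le_biUnion_card_iff_exists_injective (fun p : V × Fin (d - 1) => nbr p.1)).1 h2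
  obtain ⟨h, hbij, hor⟩ := csb_or φinj ψinj
  refine ⟨fun v => (h v).1, ?_, ?_⟩
  · intro v
    rcases hor v with e | e
    · have := φmem v
      rw [Finset.mem_product] at this
      show A v (h v).1
      rw [e]
      exact (hnbr _ _).1 this.1
    · have := ψmem (h v)
      rw [e] at this
      exact hsymm _ _ ((hnbr _ _).1 this)
  · intro u
    have hpre : {v | (h v).1 = u} = (Equiv.ofBijective h hbij) ⁻¹' {p | p.1 = u} := rfl
    rw [hpre, ← Equiv.image_symm_eq_preimage]
    rw [Set.ncard_image_of_injective _ (Equiv.ofBijective h hbij).symm.injective]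
    have : {p : V × Fin (d - 1) | p.1 = u} = (fun i => (u, i)) '' Set.univ := by
      ext ⟨a, i⟩
      simp only [Set.mem_setOf_eq, Set.image_univ, Set.mem_range]
      constructor
      · rintro rfl; exact ⟨i, rfl⟩
      · rintro ⟨j, hj⟩; exact (congrArg Prod.fst hj).symm
    rw [this, Set.ncard_image_of_injective _ (fun i j hij => (Prod.mk.injEq _ _ _ _ ▸ hij : _ ∧ _).2),
      Set.ncard_univ]
    simp

theorem stepW (hd : 2 ≤ d) (hsymm : ∀ a b, A a b → A b a)
    (g : V → V) (hg : IsGoodW A d g) (P : Finset V) (hcl : ∀ v ∈ P, g v ∈ P) (n : V) :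
    ∃ (g' : V → V) (P' : Finset V), IsGoodW A d g' ∧ (∀ v ∈ P', g' v ∈ P') ∧ P ⊆ P' ∧ n ∈ P' ∧
      ∀ v ∈ P, g' v = g v := by
  classical
  by_cases hn : n ∈ P
  · exact ⟨g, P, hg, hcl, Finset.Subset.refl _, hn, fun _ _ => rfl⟩
  have hchex : ∀ u : V, ∃ w, g w = u := by
    intro u
    have h0 : {v | g v = u}.ncard ≠ 0 := by rw [hg.2]; omega
    exact Set.nonempty_of_ncard_ne_zero h0
  choose ch hch using hchex
  by_cases hc : ∃ k, 1 ≤ k ∧ (g^[k] n ∈ P ∨ ∃ j < k, g^[k] n = g^[j] n)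
  -- Case 1 : the forward orbit of n enters P or cycles
  · refine ⟨g, P ∪ (Finset.range (Nat.find hc)).image (fun j => g^[j] n), hg, ?_, 
      Finset.subset_union_left, ?_, fun _ _ => rfl⟩
    · intro v hv
      rcases Finset.mem_union.1 hv with hv | hv
      · exact Finset.mem_union_left _ (hcl v hv)
      · obtain ⟨j, hj, rfl⟩ := Finset.mem_image.1 hv
        rw [Finset.mem_range] at hj
        have e1 : g (g^[j] n) = g^[j+1] n := (Function.iterate_succ_apply' g j n).symm
        rw [e1]
        by_cases hjk : j + 1 < Nat.find hc
        · exact Finset.mem_union_right _ (Finset.mem_image.2 ⟨j + 1, Finset.mem_range.2 hjk, rfl⟩)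
        · have hje : j + 1 = Nat.find hc := by omega
          obtain ⟨h1, h2⟩ := Nat.find_spec hc
          rw [hje]
          rcases h2 with h | ⟨j', hj', he⟩
          · exact Finset.mem_union_left _ h
          · rw [he]
            exact Finset.mem_union_right _ (Finset.mem_image.2 ⟨j', Finset.mem_range.2 hj', rfl⟩)
    · have h1 := (Nat.find_spec hc).1
      exact Finset.mem_union_right _
        (Finset.mem_image.2 ⟨0, Finset.mem_range.2 (by omega), rfl⟩)
  -- Case 2 : the forward orbit of n is injective and avoids P : surgery
  · push_neg at hc
    set a : ℤ → V := fun i => if 0 ≤ i then g^[i.toNat] n else ch^[(-i).toNat] n with ha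
    have ha_nonneg : ∀ i : ℤ, 0 ≤ i → a i = g^[i.toNat] n := fun i hi => if_pos hi
    have ha_neg : ∀ i : ℤ, i < 0 → a i = ch^[(-i).toNat] n := fun i hi => if_neg (by omega)
    have ha0 : a 0 = n := by rw [ha_nonneg 0 le_rfl]; rfl
    have hgch : ∀ (m : ℕ), g (ch^[m+1] n) = ch^[m] n := by
      intro m
      rw [Function.iterate_succ_apply']
      exact hch _
    have ga : ∀ i : ℤ, g (a i) = a (i + 1) := by
      intro i
      rcases le_or_gt 0 i with hi | hi
      · rw [ha_nonneg i hi, ha_nonneg (i+1) (by omega)]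
        have : (i + 1).toNat = i.toNat + 1 := by omega
        rw [this]
        exact (Function.iterate_succ_apply' g _ n).symm
      · rcases eq_or_lt_of_le (by omega : i ≤ -1) with hi1 | hi1
        · subst hi1
          rw [ha_neg (-1) (by omega)]
          have h1 : ((-(-1 : ℤ)).toNat) = 1 := by omega
          have h2 : ((-1 : ℤ) + 1) = 0 := by omega
          rw [h1, h2, ha0, Function.iterate_one]
          exact hch n
        · have hi2 : i + 1 < 0 := by omega
          rw [ha_neg i hi, ha_neg (i+1) hi2]
          have e : (-i).toNat = (-(i+1)).toNat + 1 := by omega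
          rw [e]
          exact hgch _
    have ga_iter : ∀ (t : ℕ) (i : ℤ), g^[t] (a i) = a (i + t) := by
      intro t
      induction t with
      | zero => intro i; simp
      | succ t ih =>
        intro i
        rw [Function.iterate_succ_apply, ga i, ih (i+1)]
        congr 1
        push_cast
        ring
    have hitP : ∀ (t : ℕ) (v : V), v ∈ P → g^[t] v ∈ P := by
      intro t
      induction t with
      | zero => intro v hv; simpa using hv
      | succ t ih =>
        intro v hv
        rw [Function.iterate_succ_apply]
        exact ih _ (hcl v hv)
    have anotP : ∀ i : ℤ, a i ∉ P := by
      intro i hi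
      rcases le_or_gt 0 i with h0 | h0
      · rcases eq_or_lt_of_le h0 with h1 | h1
        · rw [← h1, ha0] at hi; exact hn hi
        · rw [ha_nonneg i h0] at hi
          exact (hc i.toNat (by omega)).1 hi
      · have e : g^[(-i).toNat] (a i) = a 0 := by rw [ga_iter]; congr 1; omega
        have : a 0 ∈ P := by rw [← e]; exact hitP _ _ hi
        rw [ha0] at this; exact hn this
    have ainj : Function.Injective a := by
      have haux : ∀ i j : ℤ, i < j → a i = a j → False := by
        intro i j hij he
        set t : ℕ := i.natAbs + j.natAbs with ht
        have e1 : a (i + t) = a (j + t) := by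
          rw [← ga_iter, ← ga_iter, he]
        have hi0 : 0 ≤ i + t := by omega
        have hj0 : 0 ≤ j + t := by omega
        rw [ha_nonneg _ hi0, ha_nonneg _ hj0] at e1
        have hpq : (i + t).toNat < (j + t).toNat := by omega
        exact (hc (j + t).toNat (by omega)).2 (i + t).toNat hpq e1.symm
      intro i j he
      by_contra hne
      rcases lt_or_gt_of_ne hne with h | h
      · exact haux i j h he
      · exact haux j i h he.symm
    set g' : V → V := fun v =>
      if h : ∃ i, a i = v then (if h.choose % 2 = 0 then a (h.choose + 1) else a (h.choose - 1))
      else g v with hg'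
    have g'a : ∀ i : ℤ, g' (a i) = if i % 2 = 0 then a (i + 1) else a (i - 1) := by
      intro i
      have hex : ∃ i', a i' = a i := ⟨i, rfl⟩
      have hch' : hex.choose = i := ainj hex.choose_spec
      simp only [hg', dif_pos hex, hch']
    have g'off : ∀ v, (¬ ∃ i, a i = v) → g' v = g v := by
      intro v hv
      simp only [hg', dif_neg hv]
    have hadj' : ∀ v, A v (g' v) := by
      intro v
      by_cases hv : ∃ i, a i = v
      · obtain ⟨i, rfl⟩ := hv
        rw [g'a]
        by_cases hi : i % 2 = 0
        · rw [if_pos hi, ← ga]; exact hg.1 _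
        · rw [if_neg hi]
          have e : g (a (i-1)) = a i := by rw [ga]; congr 1; ring
          have := hg.1 (a (i-1))
          rw [e] at this
          exact hsymm _ _ this
      · rw [g'off v hv]; exact hg.1 v
    have hfib' : ∀ u, {v | g' v = u}.ncard = d - 1 := by
      intro u
      by_cases hu : ∃ q, a q = u
      · obtain ⟨q, rfl⟩ := hu
        rcases Int.emod_two_eq q with hq | hq
        · -- q even
          have hset : {v | g' v = a q} = insert (a (q+1)) ({v | g v = a q} \ {a (q-1)}) := by
            ext v
            simp only [Set.mem_setOf_eq, Set.mem_insert_iff, Set.mem_diff,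
              Set.mem_singleton_iff]
            by_cases hv : ∃ i, a i = v
            · obtain ⟨i, rfl⟩ := hv
              rw [g'a]
              constructor
              · intro h
                by_cases hi : i % 2 = 0
                · rw [if_pos hi] at h
                  have := ainj h
                  omega
                · rw [if_neg hi] at h
                  have := ainj h
                  left; congr 1; omega
              · intro h
                rcases h with h | ⟨h1, h2⟩
                · have hiq : i = q + 1 := ainj h
                  have : ¬ i % 2 = 0 := by omega
                  rw [if_neg this]
                  congr 1
                  omega
                · rw [ga] at h1
                  have hiq : i + 1 = q := ainj h1
                  exact absurd (by congr 1; omega : a i = a (q-1)) h2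
            · have hne1 : a (q+1) ≠ v := fun e => hv ⟨q+1, e⟩
              have hne2 : v ≠ a (q-1) := fun e => hv ⟨q-1, e.symm⟩
              rw [g'off v hv]
              constructor
              · intro h; exact Or.inr ⟨h, hne2⟩
              · rintro (h | ⟨h1, h2⟩)
                · exact absurd h.symm hne1
                · exact h1
          rw [hset, Set.ncard_exchange]
          · exact hg.2 _
          · intro hmem
            rw [Set.mem_setOf_eq, ga] at hmem
            have := ainj hmem
            omega
          · rw [Set.mem_setOf_eq, ga]
            congr 1
            omega
        · -- q odd
          have hset : {v | g' v = a q} = {v | g v = a q} := by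
            ext v
            simp only [Set.mem_setOf_eq]
            by_cases hv : ∃ i, a i = v
            · obtain ⟨i, rfl⟩ := hv
              rw [g'a]
              constructor
              · intro h
                by_cases hi : i % 2 = 0
                · rw [if_pos hi] at h
                  rw [ga]; exact h
                · rw [if_neg hi] at h
                  have := ainj h
                  omega
              · intro h
                rw [ga] at h
                have hiq : i + 1 = q := ainj h
                have hi : i % 2 = 0 := by omega
                rw [if_pos hi]
                exact congrArg a (by omega : i + 1 = q)
            · rw [g'off v hv]
          rw [hset]; exact hg.2 _
      · have hset : {v | g' v = u} = {v | g v = u} := by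
          ext v
          simp only [Set.mem_setOf_eq]
          by_cases hv : ∃ i, a i = v
          · obtain ⟨i, rfl⟩ := hv
            rw [g'a]
            constructor
            · intro h
              exfalso
              by_cases hi : i % 2 = 0
              · rw [if_pos hi] at h; exact hu ⟨i+1, h⟩
              · rw [if_neg hi] at h; exact hu ⟨i-1, h⟩
            · intro h
              exfalso
              rw [ga] at h
              exact hu ⟨i+1, h⟩
          · rw [g'off v hv]
        rw [hset]; exact hg.2 _
    have hP'agree : ∀ v ∈ P, g' v = g v := by
      intro v hv
      apply g'off
      rintro ⟨i, rfl⟩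
      exact anotP i hv
    refine ⟨g', insert n (insert (a 1) P), ⟨hadj', hfib'⟩, ?_, ?_, Finset.mem_insert_self _ _, hP'agree⟩
    · intro v hv
      rcases Finset.mem_insert.1 hv with rfl | hv
      · have : g' v = a 1 := by
          conv_lhs => rw [← ha0]
          rw [g'a]
          try norm_num
        rw [this]
        exact Finset.mem_insert_of_mem (Finset.mem_insert_self _ _)
      · rcases Finset.mem_insert.1 hv with rfl | hv
        · have : g' (a 1) = a 0 := by
            rw [g'a, if_neg (by norm_num)]
            norm_num
          rw [this, ha0]
          exact Finset.mem_insert_self _ _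
        · rw [hP'agree v hv]
          exact Finset.mem_insert_of_mem (Finset.mem_insert_of_mem (hcl v hv))
    · intro v hv
      exact Finset.mem_insert_of_mem (Finset.mem_insert_of_mem hv)

theorem absMain (hd : 2 ≤ d) (hsymm : ∀ a b, A a b → A b a)
    (nbr : V → Finset V) (hnbr : ∀ a b, b ∈ nbr a ↔ A a b)
    (g₀ : V → V) (hg₀ : IsGoodW A d g₀)
    (enum : ℕ → V) (hsur : Function.Surjective enum) :
    ∃ F : V → V, (∀ v, A v (F v)) ∧ (∀ u, {v | F v = u}.ncard = d - 1) ∧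
      (∀ v, ∃ k l, 1 ≤ l ∧ F^[k + l] v = F^[k] v) := by
  classical
  -- the type of states
  let St := {p : (V → V) × Finset V // IsGoodW A d p.1 ∧ ∀ v ∈ p.2, p.1 v ∈ p.2}
  have hstep : ∀ (s : St) (n : V), ∃ s' : St,
      s.1.2 ⊆ s'.1.2 ∧ n ∈ s'.1.2 ∧ ∀ v ∈ s.1.2, s'.1.1 v = s.1.1 v := by
    rintro ⟨⟨g, P⟩, hg, hcl⟩ n
    obtain ⟨g', P', h1, h2, h3, h4, h5⟩ := stepW hd hsymm g hg P hcl n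
    exact ⟨⟨(g', P'), h1, h2⟩, h3, h4, h5⟩
  choose stepf hsub hmem hagr using hstep
  let C : ℕ → St := fun t => Nat.rec ⟨(g₀, ∅), hg₀, by simp⟩ (fun t s => stepf s (enum t)) t
  have hC : ∀ t, C (t + 1) = stepf (C t) (enum t) := fun t => rfl
  -- monotonicity
  have hmono : ∀ t t', t ≤ t' → (C t).1.2 ⊆ (C t').1.2 := by
    intro t t' h
    induction t' with
    | zero => have : t = 0 := by omega
              subst this; exact Finset.Subset.refl _
    | succ t' ih =>
      rcases Nat.lt_or_ge t (t' + 1) with h' | h'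
      · exact (ih (by omega)).trans (by rw [hC]; exact hsub _ _)
      · have : t = t' + 1 := by omega
        subst this; exact Finset.Subset.refl _
  have hagree : ∀ t t', t ≤ t' → ∀ v ∈ (C t).1.2, (C t').1.1 v = (C t).1.1 v := by
    intro t t' h
    induction t' with
    | zero => have : t = 0 := by omega
              subst this; intro v _; rfl
    | succ t' ih =>
      rcases Nat.lt_or_ge t (t' + 1) with h' | h'
      · intro v hv
        have h1 : (C (t' + 1)).1.1 v = (C t').1.1 v := by
          rw [hC]; exact hagr _ _ v (hmono t t' (by omega) hv)
        rw [h1]; exact ih (by omega) v hv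
      · have : t = t' + 1 := by omega
        subst this; intro v _; rfl
  -- every vertex is placed
  have hplaced : ∀ v : V, v ∈ (C ((hsur v).choose + 1)).1.2 := by
    intro v
    have := hmem (C (hsur v).choose) (enum (hsur v).choose)
    rw [← hC] at this
    rwa [(hsur v).choose_spec] at this
  set idx : V → ℕ := fun v => (hsur v).choose + 1 with hidx
  set F : V → V := fun v => (C (idx v)).1.1 v with hF
  have hstab : ∀ (v : V) (t : ℕ), v ∈ (C t).1.2 → F v = (C t).1.1 v := by
    intro v t hv
    have h1 : (C (max t (idx v))).1.1 v = (C t).1.1 v := hagree t _ (le_max_left _ _) v hv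
    have h2 : (C (max t (idx v))).1.1 v = (C (idx v)).1.1 v :=
      hagree (idx v) _ (le_max_right _ _) v (hplaced v)
    rw [hF]
    simp only
    rw [← h2, h1]
  have hFadj : ∀ v, A v (F v) := fun v => ((C (idx v)).2.1).1 v
  refine ⟨F, hFadj, ?_, ?_⟩
  · -- fibers
    intro u
    set T : ℕ := (nbr u).sup idx with hT
    have hfib : {v | F v = u} = {v | (C T).1.1 v = u} := by
      ext v
      simp only [Set.mem_setOf_eq]
      constructor
      · intro h
        have hv : v ∈ nbr u := (hnbr u v).2 (hsymm _ _ (h ▸ hFadj v))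
        have h1 : v ∈ (C T).1.2 :=
          hmono (idx v) T (Finset.le_sup hv) (hplaced v)
        rw [← hstab v T h1]; exact h
      · intro h
        have hv : v ∈ nbr u := (hnbr u v).2 (hsymm _ _ (h ▸ ((C T).2.1).1 v))
        have h1 : v ∈ (C T).1.2 :=
          hmono (idx v) T (Finset.le_sup hv) (hplaced v)
        rw [hstab v T h1]; exact h
    rw [hfib]
    exact ((C T).2.1).2 u
  · -- orbits
    intro v
    have hinv : ∀ w ∈ (C (idx v)).1.2, F w ∈ (C (idx v)).1.2 := by
      intro w hw
      rw [hstab w (idx v) hw]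
      exact (C (idx v)).2.2 w hw
    have horb : ∀ i : ℕ, F^[i] v ∈ (C (idx v)).1.2 := by
      intro i
      induction i with
      | zero => simpa using hplaced v
      | succ i ih =>
        rw [Function.iterate_succ_apply']
        exact hinv _ ih
    have : ∃ i j : ℕ, i ≠ j ∧ F^[i] v = F^[j] v := by
      have hfin : Set.Finite {w | w ∈ (C (idx v)).1.2} := (C (idx v)).1.2.finite_toSet
      by_contra hcon
      push_neg at hcon
      have hinj : Function.Injective (fun i : ℕ => F^[i] v) := by
        intro i j hij
        by_contra hne
        exact hcon i j hne hij
      exact Set.Infinite.mono (fun x hx => by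
          obtain ⟨i, rfl⟩ := hx
          exact horb i : Set.range (fun i : ℕ => F^[i] v) ⊆ {w | w ∈ (C (idx v)).1.2})
        (Set.infinite_range_of_injective hinj) hfin
    obtain ⟨i, j, hne, he⟩ := this
    rcases Nat.lt_or_ge i j with h | h
    · exact ⟨i, j - i, by omega, by rw [show i + (j - i) = j by omega]; exact he.symm⟩
    · have h' : j < i := by omega
      exact ⟨j, i - j, by omega, by rw [show j + (i - j) = i by omega]; exact he⟩

end HaremAbs

/-- Weak form of the main theorem: a perfect (1,d-1)-matching whose function
makes every point eventually periodic. -/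
theorem main_theorem_weak (d : ℕ) (hd : 2 ≤ d) (E : Set (ℕ × ℕ))
    (hE : ∀ p ∈ E, 1 ≤ p.1 ∧ 1 ≤ p.2)
    (hlf : (∀ u : ℕ, {v | (u, v) ∈ E}.Finite) ∧ (∀ v : ℕ, {u | (u, v) ∈ E}.Finite))
    (href : ∀ u v : ℕ, (u, v) ∈ E → (v, u) ∈ E)
    (hirr : ∀ u : ℕ, (u, u) ∉ E)
    (hHall : HallHarem d {n | 1 ≤ n} {n | 1 ≤ n} E) :
    ∃ (M : Set (ℕ × ℕ)) (f : ℕ → ℕ),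
      PerfectMatching (d - 1) {n | 1 ≤ n} {n | 1 ≤ n} E M ∧
      (∀ v : ℕ, 1 ≤ v → (f v, v) ∈ M) ∧
      (∀ u : ℕ, 1 ≤ u → {v | 1 ≤ v ∧ f v = u}.ncard = d - 1) ∧
      (∀ n : ℕ, 1 ≤ n → ∃ k l, 1 ≤ l ∧ f^[k + l] n = f^[k] n) := by
  classical
  haveI : Nonempty {n : ℕ // 0 < n} := ⟨⟨1, one_pos⟩⟩
  set Vt := {n : ℕ // 0 < n} with hVt
  set A : Vt → Vt → Prop := fun a b => (a.1, b.1) ∈ E with hA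
  have hsymm : ∀ a b : Vt, A a b → A b a := fun a b h => href _ _ h
  have hfinnbr : ∀ a : Vt, {b : Vt | A a b}.Finite := by
    intro a
    have : {b : Vt | A a b} = Subtype.val ⁻¹' {m : ℕ | (a.1, m) ∈ E} := rfl
    rw [this]
    exact Set.Finite.preimage Subtype.val_injective.injOn (hlf.1 a.1)
  set nbr : Vt → Finset Vt := fun a => (hfinnbr a).toFinset with hnbrdef
  have hnbr : ∀ a b : Vt, b ∈ nbr a ↔ A a b := fun a b => Set.Finite.mem_toFinset _
  have hall : ∀ s : Finset Vt, d * s.card ≤ (s.biUnion nbr).card := by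
    intro s
    have hX : (Subtype.val '' (↑s : Set Vt)) ⊆ {n : ℕ | 1 ≤ n} := by
      rintro _ ⟨⟨m, hm⟩, _, rfl⟩; exact hm
    have hXf : (Subtype.val '' (↑s : Set Vt)).Finite := (s.finite_toSet).image _
    have key := hHall.1 _ hX hXf
    have e1 : (Subtype.val '' (↑s : Set Vt)).ncard = s.card := by
      rw [Set.ncard_image_of_injective _ Subtype.val_injective, Set.ncard_coe_finset]
    have e2 : NR E (Subtype.val '' (↑s : Set Vt)) =
        Subtype.val '' (↑(s.biUnion nbr) : Set Vt) := by
      ext y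
      constructor
      · rintro ⟨u, ⟨w, hw, rfl⟩, huy⟩
        have hy : 0 < y := (hE _ huy).2
        refine ⟨⟨y, hy⟩, ?_, rfl⟩
        rw [Finset.mem_coe, Finset.mem_biUnion]
        exact ⟨w, hw, (hnbr w ⟨y, hy⟩).2 huy⟩
      · rintro ⟨b, hb, rfl⟩
        rw [Finset.mem_coe, Finset.mem_biUnion] at hb
        obtain ⟨w, hw, hb'⟩ := hb
        exact ⟨w.1, ⟨w, hw, rfl⟩, (hnbr _ _).1 hb'⟩
    rw [e1, e2] at key
    rwa [Set.ncard_image_of_injective _ Subtype.val_injective, Set.ncard_coe_finset] at key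
  have hsur : Function.Surjective (fun t : ℕ => (⟨t + 1, t.succ_pos⟩ : Vt)) := by
    rintro ⟨m, hm⟩
    exact ⟨m - 1, Subtype.ext (show m - 1 + 1 = m by omega)⟩
  obtain ⟨g₀, hg₀⟩ := exists_goodW hd hsymm hnbr hall
  obtain ⟨F, hFadj, hFfib, hForb⟩ := absMain hd hsymm nbr hnbr g₀ hg₀ _ hsur
  set f : ℕ → ℕ := fun m => if h : 0 < m then (F ⟨m, h⟩).1 else 0 with hf
  set M : Set (ℕ × ℕ) := {p | ∃ v : Vt, p.1 = (F v).1 ∧ p.2 = v.1} with hM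
  have hfv : ∀ (m : ℕ) (h : 0 < m), f m = (F ⟨m, h⟩).1 := fun m h => dif_pos h
  have hfibeq : ∀ (u : ℕ) (hu : 0 < u),
      {v : ℕ | 1 ≤ v ∧ f v = u} = Subtype.val '' {w : Vt | F w = ⟨u, hu⟩} := by
    intro u hu
    ext m
    constructor
    · rintro ⟨h1, h2⟩
      rw [hfv m h1] at h2
      exact ⟨⟨m, h1⟩, Subtype.ext h2, rfl⟩
    · rintro ⟨w, hw, rfl⟩
      refine ⟨w.2, ?_⟩
      rw [hfv w.1 w.2]
      have h3 : (⟨w.1, w.2⟩ : Vt) = w := rfl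
      rw [h3]
      rw [Set.mem_setOf_eq] at hw
      rw [hw]
  refine ⟨M, f, ⟨?_, ?_, ?_⟩, ?_, ?_, ?_⟩
  · -- M ⊆ E
    rintro ⟨x, y⟩ ⟨v, h1, h2⟩
    simp only at h1 h2
    subst h1; subst h2
    exact href _ _ (hFadj v)
  · -- left degrees
    intro u hu
    have e : {w : ℕ | (u, w) ∈ M} = Subtype.val '' {v : Vt | F v = ⟨u, hu⟩} := by
      ext w
      constructor
      · rintro ⟨v, h1, h2⟩
        simp only at h1 h2
        exact ⟨v, Subtype.ext h1.symm, h2.symm⟩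
      · rintro ⟨v, hv, rfl⟩
        rw [Set.mem_setOf_eq] at hv
        exact ⟨v, by rw [hv], rfl⟩
    rw [show {v_1 | (u, v_1) ∈ M} = {w : ℕ | (u, w) ∈ M} from rfl, e,
      Set.ncard_image_of_injective _ Subtype.val_injective]
    exact hFfib ⟨u, hu⟩
  · -- right degrees
    intro w hw
    refine ⟨(F ⟨w, hw⟩).1, ⟨⟨w, hw⟩, rfl, rfl⟩, ?_⟩
    rintro u ⟨v, h1, h2⟩
    simp only at h1 h2
    have h3 : v = ⟨w, hw⟩ := Subtype.ext h2.symm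
    subst h3
    exact h1
  · -- f realizes M
    intro v hv
    exact ⟨⟨v, hv⟩, hfv v hv, rfl⟩
  · -- fibers of f
    intro u hu
    rw [hfibeq u hu, Set.ncard_image_of_injective _ Subtype.val_injective]
    exact hFfib ⟨u, hu⟩
  · -- eventual periodicity
    intro m hm
    obtain ⟨k, l, hl, he⟩ := hForb ⟨m, hm⟩
    have hiter : ∀ (i : ℕ) (x : Vt), f^[i] x.1 = (F^[i] x).1 := by
      intro i
      induction i with
      | zero => intro x; simp
      | succ i ih =>
        intro x
        rw [Function.iterate_succ_apply, Function.iterate_succ_apply]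
        have h1 : f x.1 = (F x).1 := by
          rw [hfv x.1 x.2]
        rw [h1]
        exact ih (F x)
    refine ⟨k, l, hl, ?_⟩
    have e1 := hiter (k + l) ⟨m, hm⟩
    have e2 := hiter k ⟨m, hm⟩
    simp only at e1 e2
    rw [e1, e2, he]
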